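/- Let f : ℝ×ℝ×ℝ → ℝ be C¹ with a global Lipschitz constant in (x, v), satisfying the Vlasov equation ∂_t f + v·∂_x f + E(x,t)·∂_v f = 0 for a C¹ field E : ℝ×ℝ → ℝ, and let (x(t), v(t)) solve x'(t) = v(t), v'(t) = E(x(t), t), x(T) = x₀, v(T) = v₀ on [T−h₀, T]. Then there exists C > 0 such that for all 0 < h ≤ h₀, the first-order semi-Lagrangian update satisfies |f(x₀ − v₀·h, v₀ − E(x₀, T−h)·h, T−h) − f(x₀, v₀, T)| ≤ C·h². -/

import Mathlib

open Set Metric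

private lemma fderiv_dir_eq_zero
    (f : ℝ × ℝ × ℝ → ℝ) (hf : ContDiff ℝ 1 f)
    (E : ℝ × ℝ → ℝ)
    (hVlasov : ∀ x v t : ℝ,
      deriv (fun s => f (x, v, s)) t + v * deriv (fun y => f (y, v, t)) x +
        E (x, t) * deriv (fun w => f (x, w, t)) v = 0)
    (X V t : ℝ) :
    fderiv ℝ f (X, V, t) (V, E (X, t), 1) = 0 := by
  have hfd : Differentiable ℝ f := hf.differentiable one_ne_zero
  have hF := (hfd (X, V, t)).hasFDerivAt
  have h1 : deriv (fun y => f (y, V, t)) X = fderiv ℝ f (X, V, t) (1, 0, 0) := by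
    have hc : HasDerivAt (fun y : ℝ => ((y, V, t) : ℝ × ℝ × ℝ)) (1, 0, 0) X :=
      (hasDerivAt_id X).prodMk ((hasDerivAt_const X V).prodMk (hasDerivAt_const X t))
    exact (hF.comp_hasDerivAt X hc).deriv
  have h2 : deriv (fun w => f (X, w, t)) V = fderiv ℝ f (X, V, t) (0, 1, 0) := by
    have hc : HasDerivAt (fun w : ℝ => ((X, w, t) : ℝ × ℝ × ℝ)) (0, 1, 0) V :=
      (hasDerivAt_const V X).prodMk ((hasDerivAt_id V).prodMk (hasDerivAt_const V t))
    exact (hF.comp_hasDerivAt V hc).deriv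
  have h3 : deriv (fun s => f (X, V, s)) t = fderiv ℝ f (X, V, t) (0, 0, 1) := by
    have hc : HasDerivAt (fun s : ℝ => ((X, V, s) : ℝ × ℝ × ℝ)) (0, 0, 1) t :=
      (hasDerivAt_const t X).prodMk ((hasDerivAt_const t V).prodMk (hasDerivAt_id t))
    exact (hF.comp_hasDerivAt t hc).deriv
  have hdecomp : ((V, E (X, t), 1) : ℝ × ℝ × ℝ)
      = V • ((1, 0, 0) : ℝ × ℝ × ℝ) + E (X, t) • (0, 1, 0) + (1 : ℝ) • (0, 0, 1) := by
    simp [Prod.ext_iff]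
  have hV := hVlasov X V t
  rw [h1, h2, h3] at hV
  rw [hdecomp, map_add, map_add, map_smul, map_smul, map_smul]
  simp only [smul_eq_mul] at *
  linarith

/-- The first-order semi-Lagrangian update for the Vlasov equation is second-order
accurate in a single time step: evaluating `f` at the approximate foot of the
characteristic `(x₀ − v₀ h, v₀ − E(x₀, T−h) h)` at time `T−h` reproduces
`f(x₀, v₀, T)` up to `O(h²)`. -/
theorem semi_lagrangian_first_order_update
    (f : ℝ × ℝ × ℝ → ℝ) (hf : ContDiff ℝ 1 f)
    (K : NNReal) (hLip : ∀ t : ℝ, LipschitzWith K (fun p : ℝ × ℝ => f (p.1, p.2, t)))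
    (E : ℝ × ℝ → ℝ) (hE : ContDiff ℝ 1 E)
    (hVlasov : ∀ x v t : ℝ,
      deriv (fun s => f (x, v, s)) t + v * deriv (fun y => f (y, v, t)) x +
        E (x, t) * deriv (fun w => f (x, w, t)) v = 0)
    (T h₀ x₀ v₀ : ℝ) (hh₀ : 0 < h₀)
    (x v : ℝ → ℝ)
    (hx : ∀ t ∈ Set.Icc (T - h₀) T, HasDerivAt x (v t) t)
    (hv : ∀ t ∈ Set.Icc (T - h₀) T, HasDerivAt v (E (x t, t)) t)
    (hxT : x T = x₀) (hvT : v T = v₀) :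
    ∃ C > 0, ∀ h : ℝ, 0 < h → h ≤ h₀ →
      |f (x₀ - v₀ * h, v₀ - E (x₀, T - h) * h, T - h) - f (x₀, v₀, T)| ≤ C * h ^ 2 := by
  have hfd : Differentiable ℝ f := hf.differentiable one_ne_zero
  set I : Set ℝ := Set.Icc (T - h₀) T with hIdef
  have hIconv : Convex ℝ I := convex_Icc _ _
  have hIcomp : IsCompact I := isCompact_Icc
  have hTI : T ∈ I := ⟨by linarith, le_refl T⟩
  -- continuity of x, v on I
  have hxc : ContinuousOn x I := fun t ht => ((hx t ht).continuousAt).continuousWithinAt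
  have hvc : ContinuousOn v I := fun t ht => ((hv t ht).continuousAt).continuousWithinAt
  -- bound on |v|
  obtain ⟨Mv, hMvnn, hMv⟩ : ∃ M : ℝ, 0 ≤ M ∧ ∀ t ∈ I, |v t| ≤ M := by
    obtain ⟨M₀, hM₀⟩ := hIcomp.exists_bound_of_continuousOn hvc
    refine ⟨max M₀ 0, le_max_right _ _, fun t ht => ?_⟩
    have := hM₀ t ht
    rw [Real.norm_eq_abs] at this
    exact this.trans (le_max_left _ _)
  -- bound on |E (x t, t)|
  have hExc : ContinuousOn (fun t => E (x t, t)) I :=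
    hE.continuous.comp_continuousOn (hxc.prodMk continuousOn_id)
  obtain ⟨ME, hMEnn, hME⟩ : ∃ M : ℝ, 0 ≤ M ∧ ∀ t ∈ I, |E (x t, t)| ≤ M := by
    obtain ⟨M₀, hM₀⟩ := hIcomp.exists_bound_of_continuousOn hExc
    refine ⟨max M₀ 0, le_max_right _ _, fun t ht => ?_⟩
    have := hM₀ t ht
    rw [Real.norm_eq_abs] at this
    exact this.trans (le_max_left _ _)
  -- a ball containing all relevant points
  have htR : ∀ t ∈ I, |t| ≤ |T| + h₀ := by
    intro t ht
    rcases ht with ⟨h1, h2⟩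
    rw [abs_le]
    constructor
    · have := neg_abs_le T; linarith
    · have := le_abs_self T; linarith
  obtain ⟨R, hRnn, hball1, hball2⟩ : ∃ R : ℝ, 0 ≤ R ∧
      (∀ t ∈ I, ((x t, t) : ℝ × ℝ) ∈ closedBall (0 : ℝ × ℝ) R) ∧
      (∀ s ∈ I, ((x₀, s) : ℝ × ℝ) ∈ closedBall (0 : ℝ × ℝ) R) := by
    obtain ⟨Rx₀, hRx₀⟩ := hIcomp.exists_bound_of_continuousOn hxc
    have h2 : (0:ℝ) ≤ |T| + h₀ := by positivity
    have h3 : (0:ℝ) ≤ max Rx₀ |x₀| := le_trans (abs_nonneg x₀) (le_max_right _ _)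
    refine ⟨max Rx₀ |x₀| + (|T| + h₀), by linarith, ?_, ?_⟩
    · intro t ht
      rw [mem_closedBall_zero_iff, Prod.norm_def]
      have ha : ‖x t‖ ≤ max Rx₀ |x₀| := (hRx₀ t ht).trans (le_max_left Rx₀ |x₀|)
      have hb := htR t ht
      simp only [Real.norm_eq_abs] at *
      exact max_le (by linarith) (by linarith)
    · intro s hs
      rw [mem_closedBall_zero_iff, Prod.norm_def]
      have ha : |x₀| ≤ max Rx₀ |x₀| := le_max_right Rx₀ |x₀|
      have hb := htR s hs
      simp only [Real.norm_eq_abs] at *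
      exact max_le (by linarith) (by linarith)
  -- Lipschitz bound for E on the ball
  obtain ⟨L, hLnn, hL₀⟩ : ∃ L : ℝ, 0 ≤ L ∧
      ∀ p ∈ closedBall (0 : ℝ × ℝ) R, ‖fderiv ℝ E p‖ ≤ L := by
    obtain ⟨L₀, hL₀⟩ := (isCompact_closedBall (0 : ℝ × ℝ) R).exists_bound_of_continuousOn
      ((hE.continuous_fderiv one_ne_zero).norm.continuousOn)
    refine ⟨max L₀ 0, le_max_right _ _, fun p hp => ?_⟩
    have := hL₀ p hp
    rw [Real.norm_eq_abs] at this
    exact (le_abs_self _).trans (this.trans (le_max_left _ _))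
  have hElip : ∀ p ∈ closedBall (0 : ℝ × ℝ) R, ∀ q ∈ closedBall (0 : ℝ × ℝ) R,
      |E p - E q| ≤ L * ‖p - q‖ := by
    intro p hp q hq
    have := Convex.norm_image_sub_le_of_norm_fderiv_le
      (fun z _ => hE.differentiable one_ne_zero z)
      (fun z hz => hL₀ z hz)
      (convex_closedBall _ _) hq hp
    simpa using this
  -- f is constant along the characteristic
  set g : ℝ → ℝ := fun t => f (x t, v t, t) with hgdef
  have hgderiv : ∀ t ∈ I, HasDerivWithinAt g 0 I t := by
    intro t ht
    have hc : HasDerivAt (fun s => ((x s, v s, s) : ℝ × ℝ × ℝ)) (v t, E (x t, t), 1) t :=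
      (hx t ht).prodMk ((hv t ht).prodMk (hasDerivAt_id t))
    have hg : HasDerivAt g (fderiv ℝ f (x t, v t, t) (v t, E (x t, t), 1)) t :=
      (hfd (x t, v t, t)).hasFDerivAt.comp_hasDerivAt t hc
    rw [fderiv_dir_eq_zero f hf E hVlasov (x t) (v t) t] at hg
    exact hg.hasDerivWithinAt
  have hgconst : ∀ s ∈ I, g s = g T := by
    intro s hs
    have := hIconv.norm_image_sub_le_of_norm_hasDerivWithin_le hgderiv
      (fun t _ => by simp : ∀ t ∈ I, ‖(0:ℝ)‖ ≤ 0) hTI hs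
    simp only [zero_mul] at this
    have h2 : ‖g s - g T‖ = 0 := le_antisymm this (norm_nonneg _)
    rw [norm_eq_zero, sub_eq_zero] at h2
    exact h2
  -- Lipschitz bounds for x and v on I
  have hxlip : ∀ s ∈ I, |x s - x₀| ≤ Mv * |s - T| := by
    intro s hs
    have := hIconv.norm_image_sub_le_of_norm_hasDerivWithin_le
      (fun t ht => (hx t ht).hasDerivWithinAt) (fun t ht => hMv t ht) hTI hs
    rw [hxT] at this
    simpa using this
  have hvlip : ∀ s ∈ I, |v s - v₀| ≤ ME * |s - T| := by
    intro s hs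
    have := hIconv.norm_image_sub_le_of_norm_hasDerivWithin_le
      (fun t ht => (hv t ht).hasDerivWithinAt) (fun t ht => hME t ht) hTI hs
    rw [hvT] at this
    simpa using this
  -- the constant
  refine ⟨(K : ℝ) * (ME + L * (Mv + 1)) + 1, by positivity, ?_⟩
  intro h hh hhh₀
  set E₀ : ℝ := E (x₀, T - h) with hE₀def
  have hThI : T - h ∈ I := ⟨by linarith, by linarith⟩
  set Ih : Set ℝ := Set.Icc (T - h) T with hIhdef
  have hIhsub : Ih ⊆ I := Icc_subset_Icc (by linarith) le_rfl
  have hIhconv : Convex ℝ Ih := convex_Icc _ _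
  have hTIh : T ∈ Ih := ⟨by linarith, le_refl T⟩
  have hThIh : T - h ∈ Ih := ⟨le_refl _, by linarith⟩
  have habs : ∀ t ∈ Ih, |t - T| ≤ h := by
    intro t ht
    rcases ht with ⟨h1, h2⟩
    rw [abs_le]; constructor <;> linarith
  -- x error
  have hxerr : |x (T - h) - (x₀ - v₀ * h)| ≤ ME * h * h := by
    have hd : ∀ t ∈ Ih, HasDerivWithinAt (fun t => x t - v₀ * t) (v t - v₀) Ih t := by
      intro t ht
      exact (((hx t (hIhsub ht)).sub (((hasDerivAt_id t).const_mul v₀).congr_deriv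
        (mul_one v₀)))).hasDerivWithinAt
    have hb : ∀ t ∈ Ih, ‖v t - v₀‖ ≤ ME * h := by
      intro t ht
      have h1 := hvlip t (hIhsub ht)
      have h2 := habs t ht
      have : ME * |t - T| ≤ ME * h := mul_le_mul_of_nonneg_left h2 hMEnn
      simp only [Real.norm_eq_abs]; linarith
    have := hIhconv.norm_image_sub_le_of_norm_hasDerivWithin_le hd hb hTIh hThIh
    have heq : (fun t => x t - v₀ * t) (T - h) - (fun t => x t - v₀ * t) T
        = x (T - h) - (x₀ - v₀ * h) := by
      simp only []; rw [← hxT]; ring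
    rw [heq] at this
    have hnorm : ‖T - h - T‖ = h := by
      rw [Real.norm_eq_abs]; rw [abs_of_nonpos (by linarith)]; ring
    rw [hnorm] at this
    simpa using this
  -- v error
  have hverr : |v (T - h) - (v₀ - E₀ * h)| ≤ L * (Mv + 1) * h * h := by
    have hd : ∀ t ∈ Ih, HasDerivWithinAt (fun t => v t - E₀ * t) (E (x t, t) - E₀) Ih t := by
      intro t ht
      exact (((hv t (hIhsub ht)).sub (((hasDerivAt_id t).const_mul E₀).congr_deriv
        (mul_one E₀)))).hasDerivWithinAt
    have hb : ∀ t ∈ Ih, ‖E (x t, t) - E₀‖ ≤ L * (Mv + 1) * h := by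
      intro t ht
      have hp := hball1 t (hIhsub ht)
      have hq := hball2 (T - h) hThI
      have h1 := hElip _ hp _ hq
      have hpos : (0:ℝ) ≤ Mv * h := mul_nonneg hMvnn hh.le
      have hnd : ‖((x t, t) : ℝ × ℝ) - (x₀, T - h)‖ ≤ (Mv + 1) * h := by
        rw [Prod.norm_def]
        apply max_le
        · have h2 := hxlip t (hIhsub ht)
          have h3 := habs t ht
          have h4 : Mv * |t - T| ≤ Mv * h := mul_le_mul_of_nonneg_left h3 hMvnn
          simp only [Prod.fst_sub, Real.norm_eq_abs]
          nlinarith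
        · simp only [Prod.snd_sub, Real.norm_eq_abs]
          rcases ht with ⟨ha, hb2⟩
          rw [abs_le]
          constructor <;> nlinarith
      have h2 : L * ‖((x t, t) : ℝ × ℝ) - (x₀, T - h)‖ ≤ L * ((Mv + 1) * h) :=
        mul_le_mul_of_nonneg_left hnd hLnn
      simp only [Real.norm_eq_abs]
      calc |E (x t, t) - E₀| ≤ L * ‖((x t, t) : ℝ × ℝ) - (x₀, T - h)‖ := h1
        _ ≤ L * ((Mv + 1) * h) := h2
        _ = L * (Mv + 1) * h := by ring
    have := hIhconv.norm_image_sub_le_of_norm_hasDerivWithin_le hd hb hTIh hThIh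
    have heq : (fun t => v t - E₀ * t) (T - h) - (fun t => v t - E₀ * t) T
        = v (T - h) - (v₀ - E₀ * h) := by
      simp only []; rw [← hvT]; ring
    rw [heq] at this
    have hnorm : ‖T - h - T‖ = h := by
      rw [Real.norm_eq_abs]; rw [abs_of_nonpos (by linarith)]; ring
    rw [hnorm] at this
    simpa using this
  -- combine
  have hgeq : f (x (T - h), v (T - h), T - h) = f (x₀, v₀, T) := by
    have := hgconst (T - h) hThI
    simp only [hgdef] at this
    rw [hxT, hvT] at this
    exact this
  have hlip := (hLip (T - h)).dist_le_mul
    (x₀ - v₀ * h, v₀ - E₀ * h) (x (T - h), v (T - h))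
  simp only [] at hlip
  rw [← hgeq]
  have hdist : dist ((x₀ - v₀ * h, v₀ - E₀ * h) : ℝ × ℝ) (x (T - h), v (T - h))
      ≤ (ME + L * (Mv + 1)) * h ^ 2 := by
    rw [Prod.dist_eq]
    apply max_le
    · rw [Real.dist_eq, abs_sub_comm]
      nlinarith [hxerr, mul_nonneg (mul_nonneg hLnn (by linarith : (0:ℝ) ≤ Mv + 1)) (sq_nonneg h)]
    · rw [Real.dist_eq, abs_sub_comm]
      nlinarith [hverr, mul_nonneg hMEnn (sq_nonneg h)]
  have hKd : dist (f (x₀ - v₀ * h, v₀ - E₀ * h, T - h)) (f (x (T - h), v (T - h), T - h))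
      ≤ (K : ℝ) * ((ME + L * (Mv + 1)) * h ^ 2) := by
    calc dist (f (x₀ - v₀ * h, v₀ - E₀ * h, T - h)) (f (x (T - h), v (T - h), T - h))
        ≤ (K : ℝ) * dist ((x₀ - v₀ * h, v₀ - E₀ * h) : ℝ × ℝ) (x (T - h), v (T - h)) := hlip
      _ ≤ (K : ℝ) * ((ME + L * (Mv + 1)) * h ^ 2) :=
          mul_le_mul_of_nonneg_left hdist K.coe_nonneg
  rw [Real.dist_eq] at hKd
  have hsq : 0 < h ^ 2 := by positivity
  nlinarith [hKd]
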